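/- arXiv:2312.03947 — 2 statements merged into one kernel-verified Lean document; each statement's English description precedes it below -/
import Mathlib

section
/- Let n ≥ 2, let m₁,…,mₙ, a₁,…,aₙ, γ₁,…,γₙ, xₙ*, S*, D be positive reals, let D₁,…,Dₙ be reals, let q, p ∈ (0,1), and set fᵢ := mᵢS*/(S* + aᵢ) for i = 1,…,n, αₙ := mₙ/(S* + aₙ) − S*mₙ/(S* + aₙ)², and β := aₙmₙxₙ*/(γₙ(S* + aₙ)²). Consider the (n+1)×(n+1) real matrix M (indexed 0,…,n) with M(i,i) = fᵢ₊₁ − Dᵢ₊₁ for 0 ≤ i ≤ n−2 and all other entries of rows 0,…,n−2 equal to zero; row n−1 equal to (0,…,0, (fₙ − qDₙ)(1 − p), xₙ*·αₙ); and row n equal to (−f₁/γ₁, …, −fₙ/γₙ, −D + β). Assume fᵢ − Dᵢ < 0 for i = 1,…,n−1, assume (fₙ − qDₙ)(1 − p) − D + β < 0, and assume (fₙ − qDₙ)(1 − p)(−D + β) + (fₙ/γₙ)·xₙ*·αₙ > 0. Then every complex eigenvalue of M has negative real part. -/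
/-- 2×2 stability: trace < 0 and det > 0 force eigenvalues in the left half-plane. -/
lemma aux_sink_two (A B C E : ℝ) (u w μ : ℂ)
    (huw : u ≠ 0 ∨ w ≠ 0)
    (e1 : (A : ℂ) * u + (B : ℂ) * w = μ * u)
    (e2 : (C : ℂ) * u + (E : ℂ) * w = μ * w)
    (hT : A + E < 0) (hΔ : A * E - B * C > 0) : μ.re < 0 := by
  have hq1 : ((μ - (A:ℂ)) * (μ - (E:ℂ)) - (B:ℂ) * (C:ℂ)) * u = 0 := by
    linear_combination ((E:ℂ) - μ) * e1 - (B:ℂ) * e2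
  have hq2 : ((μ - (A:ℂ)) * (μ - (E:ℂ)) - (B:ℂ) * (C:ℂ)) * w = 0 := by
    linear_combination (-(C:ℂ)) * e1 + ((A:ℂ) - μ) * e2
  have hquad : (μ - (A:ℂ)) * (μ - (E:ℂ)) - (B:ℂ) * (C:ℂ) = 0 := by
    rcases huw with h | h
    · exact (mul_eq_zero.mp hq1).resolve_right h
    · exact (mul_eq_zero.mp hq2).resolve_right h
  have h1 : μ.re ^ 2 - μ.im ^ 2 - (A + E) * μ.re + (A * E - B * C) = 0 := by
    have h := congrArg Complex.re hquad
    simp only [Complex.sub_re, Complex.mul_re, Complex.sub_im, Complex.ofReal_re,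
      Complex.ofReal_im, Complex.zero_re, mul_zero, zero_mul, sub_zero] at h
    linear_combination h
  have h2 : μ.im * (2 * μ.re - (A + E)) = 0 := by
    have h := congrArg Complex.im hquad
    simp only [Complex.sub_im, Complex.mul_im, Complex.sub_re, Complex.ofReal_re,
      Complex.ofReal_im, Complex.zero_im, mul_zero, zero_mul, sub_zero, add_zero] at h
    linear_combination h
  rcases mul_eq_zero.mp h2 with hy | hx
  · by_contra hcon
    push_neg at hcon
    nlinarith [mul_nonneg (by linarith : (0:ℝ) ≤ -(A + E)) hcon, sq_nonneg μ.re]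
  · linarith


/-- The Jacobian of the `n`-species chemostat extraction model at the boundary
equilibrium `E^{xₙ} = (0, …, 0, xₙ*, S*)` has all its (complex) eigenvalues in the open
left half-plane when `fᵢ - Dᵢ < 0` for `i = 1, …, n-1` and the trace and determinant
conditions hold; i.e. `E^{xₙ}` is a local sink. -/
theorem n_species_boundary_equilibrium_sink
    (n : ℕ) (hn : 2 ≤ n)
    (m a γ : Fin n → ℝ) (Drem : Fin n → ℝ) (xn S D q p : ℝ)
    (hm : ∀ i, 0 < m i) (ha : ∀ i, 0 < a i) (hγ : ∀ i, 0 < γ i)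
    (hxn : 0 < xn) (hS : 0 < S) (hD : 0 < D)
    (hq : q ∈ Set.Ioo (0 : ℝ) 1) (hp : p ∈ Set.Ioo (0 : ℝ) 1)
    (f : Fin n → ℝ) (hf : ∀ i, f i = m i * S / (S + a i))
    (αn β : ℝ)
    (hα : αn = m ⟨n - 1, by omega⟩ / (S + a ⟨n - 1, by omega⟩)
          - S * m ⟨n - 1, by omega⟩ / (S + a ⟨n - 1, by omega⟩) ^ 2)
    (hβ : β = a ⟨n - 1, by omega⟩ * m ⟨n - 1, by omega⟩ * xn
          / (γ ⟨n - 1, by omega⟩ * (S + a ⟨n - 1, by omega⟩) ^ 2))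
    (M : Matrix (Fin (n + 1)) (Fin (n + 1)) ℝ)
    -- rows 0, …, n-2 : only the diagonal entry `fᵢ₊₁ - Dᵢ₊₁` is nonzero
    (hMdiag : ∀ i : Fin (n + 1), ∀ hi : (i : ℕ) ≤ n - 2,
      M i i = f ⟨(i : ℕ), by omega⟩ - Drem ⟨(i : ℕ), by omega⟩)
    (hMoff : ∀ i j : Fin (n + 1), (i : ℕ) ≤ n - 2 → i ≠ j → M i j = 0)
    -- row n-1 : `(0, …, 0, (fₙ - qDₙ)(1 - p), xₙ*·αₙ)`
    (hMrow0 : ∀ j : Fin (n + 1), (j : ℕ) ≤ n - 2 → M ⟨n - 1, by omega⟩ j = 0)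
    (hMrowd : M ⟨n - 1, by omega⟩ ⟨n - 1, by omega⟩
      = (f ⟨n - 1, by omega⟩ - q * Drem ⟨n - 1, by omega⟩) * (1 - p))
    (hMrowl : M ⟨n - 1, by omega⟩ ⟨n, by omega⟩ = xn * αn)
    -- row n : `(-f₁/γ₁, …, -fₙ/γₙ, -D + β)`
    (hMlast : ∀ j : Fin n, M ⟨n, by omega⟩ ⟨(j : ℕ), by omega⟩ = -f j / γ j)
    (hMll : M ⟨n, by omega⟩ ⟨n, by omega⟩ = -D + β)
    -- stability hypotheses
    (hneg : ∀ i : Fin n, (i : ℕ) < n - 1 → f i - Drem i < 0)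
    (htrace : (f ⟨n - 1, by omega⟩ - q * Drem ⟨n - 1, by omega⟩) * (1 - p) - D + β < 0)
    (hdet : (f ⟨n - 1, by omega⟩ - q * Drem ⟨n - 1, by omega⟩) * (1 - p) * (-D + β)
      + (f ⟨n - 1, by omega⟩ / γ ⟨n - 1, by omega⟩) * xn * αn > 0) :
    ∀ μ : ℂ, ((M.map (Complex.ofReal)).charpoly).IsRoot μ → μ.re < 0 := by
  intro μ hroot
  set M' := M.map Complex.ofReal with hM'
  -- canonical indices
  have hn1 : n - 1 < n := by omega
  have hn1' : n - 1 < n + 1 := by omega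
  have hnn : n < n + 1 := by omega
  set fn1 : Fin n := ⟨n - 1, hn1⟩ with hfn1
  set N1 : Fin (n + 1) := ⟨n - 1, hn1'⟩ with hN1
  set NN : Fin (n + 1) := ⟨n, hnn⟩ with hNN
  have hne : N1 ≠ NN := by
    simp only [hN1, hNN, ne_eq, Fin.mk.injEq]
    omega
  -- restate hypotheses with the canonical proofs
  have htrace' : (f fn1 - q * Drem fn1) * (1 - p) - D + β < 0 := htrace
  have hdet' : (f fn1 - q * Drem fn1) * (1 - p) * (-D + β)
      + (f fn1 / γ fn1) * xn * αn > 0 := hdet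
  have eA : M N1 N1 = (f fn1 - q * Drem fn1) * (1 - p) := hMrowd
  have eB : M N1 NN = xn * αn := hMrowl
  have eC : M NN N1 = -f fn1 / γ fn1 := hMlast fn1
  have eE : M NN NN = -D + β := hMll
  -- eigenvector
  have hdet0 : ((Matrix.scalar (Fin (n+1)) μ) - M').det = 0 := by
    have h : (M'.charpoly).eval μ = 0 := hroot
    rw [Matrix.charpoly, eval_det, Matrix.matPolyEquiv_charmatrix] at h
    simpa using h
  obtain ⟨v, hv0, hveq⟩ := Matrix.exists_mulVec_eq_zero_iff.mpr hdet0
  rw [Matrix.sub_mulVec] at hveq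
  have hsc : (Matrix.scalar (Fin (n+1)) μ).mulVec v = μ • v := by
    ext i
    simp [Matrix.scalar, Matrix.mulVec_diagonal]
  rw [hsc] at hveq
  have hmv : M'.mulVec v = μ • v := (sub_eq_zero.mp hveq).symm
  have hc : ∀ i, ∑ j, M' i j * v j = μ * v i := by
    intro i
    have := congrFun hmv i
    simpa [Matrix.mulVec, dotProduct] using this
  by_cases hA : ∃ i : Fin (n + 1), (i : ℕ) ≤ n - 2 ∧ v i ≠ 0
  · -- an eigenvalue from the diagonal block
    obtain ⟨i, hi, hvi⟩ := hA
    have hsum : ∑ j, M' i j * v j = M' i i * v i := by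
      refine Finset.sum_eq_single i (fun b _ hb => ?_) (by simp)
      have : M i b = 0 := hMoff i b hi (Ne.symm hb)
      simp [hM', Matrix.map_apply, this]
    have t := hc i
    rw [hsum] at t
    have hμ : μ = M' i i := (mul_right_cancel₀ hvi t).symm
    have : μ.re = M i i := by
      rw [hμ]
      simp [hM', Matrix.map_apply]
    rw [this, hMdiag i hi]
    exact hneg _ (by show (i : ℕ) < n - 1; omega)
  · -- supported on the last two coordinates
    push_neg at hA
    have hzero : ∀ i : Fin (n + 1), (i : ℕ) ≤ n - 2 → v i = 0 := fun i hi => hA i hi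
    have htri : ∀ i : Fin (n + 1), (i : ℕ) ≤ n - 2 ∨ i = N1 ∨ i = NN := by
      intro i
      by_cases h1 : (i : ℕ) ≤ n - 2
      · exact Or.inl h1
      · right
        have : (i : ℕ) = n - 1 ∨ (i : ℕ) = n := by omega
        rcases this with h | h
        · exact Or.inl (Fin.ext h)
        · exact Or.inr (Fin.ext h)
    have hsum : ∀ g : Fin (n + 1) → ℂ, (∀ j : Fin (n + 1), (j : ℕ) ≤ n - 2 → g j = 0) →
        ∑ j, g j = g N1 + g NN := by
      intro g hg
      rw [← Finset.sum_subset (Finset.subset_univ ({N1, NN} : Finset (Fin (n + 1))))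
        (fun x _ hx => ?_)]
      · exact Finset.sum_pair hne
      · simp only [Finset.mem_insert, Finset.mem_singleton, not_or] at hx
        rcases htri x with h | h | h
        · exact hg x h
        · exact absurd h hx.1
        · exact absurd h hx.2
    set u := v N1 with hu
    set w := v NN with hw
    have huw : u ≠ 0 ∨ w ≠ 0 := by
      by_contra hcon
      push_neg at hcon
      apply hv0
      funext i
      rcases htri i with h | h | h
      · exact hzero i h
      · rw [h]; exact hcon.1
      · rw [h]; exact hcon.2
    have e1 : (((f fn1 - q * Drem fn1) * (1 - p) : ℝ) : ℂ) * u + ((xn * αn : ℝ) : ℂ) * w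
        = μ * u := by
      have t := hc N1
      rw [hsum (fun j => M' N1 j * v j)
        (fun j hj => by simp [hM', Matrix.map_apply, hMrow0 j hj])] at t
      simp only [hM', Matrix.map_apply, eA, eB] at t
      exact t
    have e2 : ((-f fn1 / γ fn1 : ℝ) : ℂ) * u + ((-D + β : ℝ) : ℂ) * w = μ * w := by
      have t := hc NN
      rw [hsum (fun j => M' NN j * v j)
        (fun j hj => by simp [hzero j hj])] at t
      simp only [hM', Matrix.map_apply, eC, eE] at t
      exact t
    refine aux_sink_two ((f fn1 - q * Drem fn1) * (1 - p)) (xn * αn) (-f fn1 / γ fn1)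
      (-D + β) u w μ huw e1 e2 (by linarith) ?_
    have e : (f fn1 - q * Drem fn1) * (1 - p) * (-D + β) - xn * αn * (-f fn1 / γ fn1)
        = (f fn1 - q * Drem fn1) * (1 - p) * (-D + β) + (f fn1 / γ fn1) * xn * αn := by
      ring
    linarith [hdet', e]
end

section
/- Let C₁, C₂ > 0 and 1 < l < 2, and let u₀ > (C₂/C₁)^{1/(l−1)}. Then there is no differentiable function u : [0, ∞) → ℝ with u(0) = u₀, u(t) > 0 for all t ≥ 0, and u'(t) ≥ C₁·u(t)^l − C₂·u(t) for all t ≥ 0. Equivalently, any positive solution of this differential inequality with sufficiently large initial data blows up in finite time. -/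
/-- Finite-time blow-up by comparison with `ẋ = C₁x^l - C₂x`, `1 < l < 2`: there is no
globally defined differentiable positive function `u` on `[0, ∞)` with
`u(0) = u₀ > (C₂/C₁)^(1/(l-1))` satisfying `u' ≥ C₁ u^l - C₂ u`. -/
theorem superlinear_inequality_blowup
    (C₁ C₂ l u₀ : ℝ) (hC₁ : 0 < C₁) (hC₂ : 0 < C₂) (hl₁ : 1 < l) (hl₂ : l < 2)
    (hu₀ : (C₂ / C₁) ^ (1 / (l - 1)) < u₀) :
    ¬ ∃ (u u' : ℝ → ℝ),
        u 0 = u₀ ∧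
        (∀ t : ℝ, 0 ≤ t → 0 < u t) ∧
        (∀ t : ℝ, 0 ≤ t → HasDerivWithinAt u (u' t) (Set.Ici 0) t) ∧
        (∀ t : ℝ, 0 ≤ t → C₁ * u t ^ l - C₂ * u t ≤ u' t) := by
  rintro ⟨u, u', hu0, hupos, hderiv, hineq⟩
  have hl1 : (0:ℝ) < l - 1 := by linarith
  have hMpos : (0:ℝ) < (C₂ / C₁) ^ (1 / (l - 1)) :=
    Real.rpow_pos_of_pos (div_pos hC₂ hC₁) _
  have hu₀pos : 0 < u₀ := hMpos.trans hu₀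
  set k : ℝ := (l - 1) * C₂ with hk
  have hkpos : 0 < k := mul_pos hl1 hC₂
  set w : ℝ → ℝ := fun t => u t ^ (1 - l) with hw
  have hwpos : ∀ t, 0 ≤ t → 0 < w t := fun t ht =>
    Real.rpow_pos_of_pos (hupos t ht) _
  -- w(0) < C₁/C₂
  have hw0lt : w 0 < C₁ / C₂ := by
    have h1 : u₀ ^ (1 - l) < ((C₂ / C₁) ^ (1 / (l - 1))) ^ (1 - l) :=
      Real.rpow_lt_rpow_of_neg hMpos hu₀ (by linarith)
    have h2 : ((C₂ / C₁) ^ (1 / (l - 1))) ^ (1 - l) = C₁ / C₂ := by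
      rw [← Real.rpow_mul (le_of_lt (div_pos hC₂ hC₁)),
          show (1 / (l - 1)) * (1 - l) = -1 by field_simp; ring,
          Real.rpow_neg_one, inv_div]
    show u 0 ^ (1 - l) < C₁ / C₂
    rw [hu0]
    exact h2 ▸ h1
  -- derivative of w
  have hwderiv : ∀ t, 0 ≤ t →
      HasDerivWithinAt w (u' t * (1 - l) * u t ^ (1 - l - 1)) (Set.Ici 0) t := by
    intro t ht
    exact (hderiv t ht).rpow_const (Or.inl (ne_of_gt (hupos t ht)))
  -- key differential inequality for w
  have hwineq : ∀ t, 0 ≤ t →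
      u' t * (1 - l) * u t ^ (1 - l - 1) ≤ k * (w t - C₁ / C₂) := by
    intro t ht
    have hut := hupos t ht
    have hneg : u' t * (1 - l) * u t ^ (1 - l - 1)
        ≤ (C₁ * u t ^ l - C₂ * u t) * (1 - l) * u t ^ (1 - l - 1) := by
      have h1 : (0:ℝ) < u t ^ (1 - l - 1) := Real.rpow_pos_of_pos hut _
      have hc : (1 - l) * u t ^ (1 - l - 1) ≤ 0 := by nlinarith
      have hm := mul_le_mul_of_nonpos_right (hineq t ht) hc
      calc u' t * (1 - l) * u t ^ (1 - l - 1)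
          = u' t * ((1 - l) * u t ^ (1 - l - 1)) := by ring
        _ ≤ (C₁ * u t ^ l - C₂ * u t) * ((1 - l) * u t ^ (1 - l - 1)) := hm
        _ = (C₁ * u t ^ l - C₂ * u t) * (1 - l) * u t ^ (1 - l - 1) := by ring
    refine hneg.trans (le_of_eq ?_)
    have e1 : u t ^ l * u t ^ (1 - l - 1) = u t ^ (0:ℝ) := by
      rw [← Real.rpow_add hut]; ring_nf
    have e2 : u t * u t ^ (1 - l - 1) = u t ^ (1 - l) := by
      nth_rewrite 1 [← Real.rpow_one (u t)]
      rw [← Real.rpow_add hut]; ring_nf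
    rw [Real.rpow_zero] at e1
    have : (C₁ * u t ^ l - C₂ * u t) * (1 - l) * u t ^ (1 - l - 1)
        = (1 - l) * (C₁ * (u t ^ l * u t ^ (1 - l - 1))
            - C₂ * (u t * u t ^ (1 - l - 1))) := by ring
    rw [this, e1, e2]
    have : w t = u t ^ (1 - l) := rfl
    rw [← this, hk]
    field_simp
    ring
  -- z(t) = (w t - C₁/C₂) * exp(-k t) is antitone on [0, ∞)
  set z : ℝ → ℝ := fun t => (w t - C₁ / C₂) * Real.exp (-k * t) with hz
  have hzderiv : ∀ t, 0 ≤ t → HasDerivWithinAt z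
      ((u' t * (1 - l) * u t ^ (1 - l - 1)) * Real.exp (-k * t)
        + (w t - C₁ / C₂) * (Real.exp (-k * t) * -k)) (Set.Ici 0) t := by
    intro t ht
    have hexp : HasDerivAt (fun s : ℝ => Real.exp (-k * s)) (Real.exp (-k * t) * -k) t := by
      have : HasDerivAt (fun s : ℝ => -k * s) (-k) t := by
        simpa using (hasDerivAt_id t).const_mul (-k)
      exact this.exp
    exact ((hwderiv t ht).sub_const _).mul (hexp.hasDerivWithinAt)
  have hzanti : AntitoneOn z (Set.Ici 0) := by
    apply antitoneOn_of_hasDerivWithinAt_nonpos (convex_Ici 0)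
    · intro t ht
      exact (hzderiv t ht).continuousWithinAt
    · intro t ht
      rw [interior_Ici] at ht ⊢
      exact (hzderiv t (le_of_lt ht)).mono (Set.Ioi_subset_Ici le_rfl)
    · intro t ht
      rw [interior_Ici] at ht
      have ht' : (0:ℝ) ≤ t := le_of_lt ht
      have h1 : (0:ℝ) < Real.exp (-k * t) := Real.exp_pos _
      have h2 := hwineq t ht'
      nlinarith
  -- hence z t ≤ z 0 < 0 for all t ≥ 0
  have hz0neg : z 0 < 0 := by
    have : Real.exp (-k * 0) = 1 := by norm_num
    rw [hz]
    simp only [this]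
    nlinarith [hw0lt]
  -- choose a large time
  set z0 : ℝ := z 0 with hz0
  set R : ℝ := (C₁ / C₂) / (-z0) with hR
  have hz0pos : 0 < -z0 := by linarith
  have hRpos : 0 < R := div_pos (div_pos hC₁ hC₂) hz0pos
  set T : ℝ := max 0 (R / k) with hT
  have hT0 : (0:ℝ) ≤ T := le_max_left _ _
  have hexpT : R ≤ Real.exp (k * T) := by
    have h1 : R / k ≤ T := le_max_right _ _
    have h2 : R ≤ k * T := by
      rw [div_le_iff₀ hkpos] at h1; linarith [h1]
    calc R ≤ k * T := h2
      _ ≤ k * T + 1 := by linarith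
      _ ≤ Real.exp (k * T) := Real.add_one_le_exp _
  -- z T ≤ z 0, unfold
  have hzT : z T ≤ z0 := hzanti (Set.self_mem_Ici) hT0 hT0
  have hwT : w T - C₁ / C₂ ≤ z0 * Real.exp (k * T) := by
    have hE : (0:ℝ) < Real.exp (-k * T) := Real.exp_pos _
    have h1 : (w T - C₁ / C₂) * Real.exp (-k * T) ≤ z0 := hzT
    have h2 : (w T - C₁ / C₂) ≤ z0 / Real.exp (-k * T) := by
      rw [le_div_iff₀ hE]; exact h1
    have h3 : z0 / Real.exp (-k * T) = z0 * Real.exp (k * T) := by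
      rw [show -k * T = -(k * T) by ring, Real.exp_neg, div_inv_eq_mul]
    linarith [h2, h3.le, h3.ge]
  have hwTneg : w T ≤ 0 := by
    have h3 : z0 * Real.exp (k * T) ≤ z0 * R := by
      apply mul_le_mul_of_nonpos_left hexpT (le_of_lt (by linarith : z0 < 0))
    have hz0ne : z0 ≠ 0 := by linarith
    have h4 : z0 * R = -(C₁ / C₂) := by
      rw [hR]
      field_simp
    nlinarith [hwT]
  exact absurd (hwpos T hT0) (not_lt.mpr hwTneg)
end
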